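/- Every nonzero element of the quaternion algebra ℍ[ℚ, −p, −q] is invertible; that is, ℍ[ℚ, −p, −q] is a division ring. -/

import Mathlib

open Quaternion

/-- Let `p` and `q` be odd primes with `q ≡ 3 (mod 8)` and Legendre symbol
`(-q/p) = -1`. Then every nonzero element of the quaternion algebra `ℍ[ℚ, -p, -q]`
is invertible, i.e. `ℍ[ℚ, -p, -q]` is a division ring. -/
theorem quaternionAlgebra_isUnit_of_ne_zero (p q : ℕ) [Fact p.Prime] (hq : q.Prime)
    (hpodd : Odd p) (hqodd : Odd q) (hq8 : q % 8 = 3)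
    (hleg : legendreSym p (-(q : ℤ)) = -1)
    (x : ℍ[ℚ, -(p : ℚ), -(q : ℚ)]) (hx : x ≠ 0) :
    IsUnit x := by
  have hp0 : (0 : ℚ) < p := by exact_mod_cast (Fact.out : p.Prime).pos
  have hq0 : (0 : ℚ) < q := by exact_mod_cast hq.pos
  set n : ℚ := x.re ^ 2 + p * x.imI ^ 2 + q * x.imJ ^ 2 + p * q * x.imK ^ 2 with hn
  clear_value n
  have hterms : (0:ℚ) ≤ x.re ^ 2 ∧ (0:ℚ) ≤ (p:ℚ) * x.imI ^ 2 ∧ (0:ℚ) ≤ (q:ℚ) * x.imJ ^ 2 ∧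
      (0:ℚ) ≤ (p:ℚ) * (q:ℚ) * x.imK ^ 2 :=
    ⟨sq_nonneg _, mul_nonneg hp0.le (sq_nonneg _), mul_nonneg hq0.le (sq_nonneg _),
      mul_nonneg (mul_pos hp0 hq0).le (sq_nonneg _)⟩
  obtain ⟨t1, t2, t3, t4⟩ := hterms
  have hn0 : n ≠ 0 := by
    intro h
    apply hx
    have h1 : x.re ^ 2 = 0 := by linarith
    have h2 : (p:ℚ) * x.imI ^ 2 = 0 := by linarith
    have h3 : (q:ℚ) * x.imJ ^ 2 = 0 := by linarith
    have h4 : (p:ℚ) * (q:ℚ) * x.imK ^ 2 = 0 := by linarith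
    have e1 : x.re = 0 := by
      have := pow_eq_zero_iff (n := 2) (by norm_num) |>.mp h1; exact this
    have e2 : x.imI = 0 := by
      have : x.imI ^ 2 = 0 := by
        rcases mul_eq_zero.mp h2 with h | h
        · exact absurd h hp0.ne'
        · exact h
      exact pow_eq_zero_iff (n := 2) (by norm_num) |>.mp this
    have e3 : x.imJ = 0 := by
      have : x.imJ ^ 2 = 0 := by
        rcases mul_eq_zero.mp h3 with h | h
        · exact absurd h hq0.ne'
        · exact h
      exact pow_eq_zero_iff (n := 2) (by norm_num) |>.mp this
    have e4 : x.imK = 0 := by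
      have : x.imK ^ 2 = 0 := by
        rcases mul_eq_zero.mp h4 with h | h
        · exact absurd h (mul_pos hp0 hq0).ne'
        · exact h
      exact pow_eq_zero_iff (n := 2) (by norm_num) |>.mp this
    ext <;> simp [e1, e2, e3, e4]
  set y : ℍ[ℚ, -(p : ℚ), -(q : ℚ)] := ⟨x.re / n, -x.imI / n, -x.imJ / n, -x.imK / n⟩ with hy
  refine isUnit_iff_exists.2 ⟨y, ?_, ?_⟩ <;>
  · ext <;>
      simp only [hy, QuaternionAlgebra.re_mul, QuaternionAlgebra.imI_mul,
        QuaternionAlgebra.imJ_mul, QuaternionAlgebra.imK_mul,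
        QuaternionAlgebra.re_one, QuaternionAlgebra.imI_one, QuaternionAlgebra.imJ_one,
        QuaternionAlgebra.imK_one] <;>
      field_simp <;>
      (try rw [hn]) <;> ring
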